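/- Let 0 ≤ ε < 1 and let {Λ_i}_{i∈I} be an ε-nearly Parseval g-frame for an n-dimensional Hilbert space H, with g-frame operator S. Then ∑_i ‖Λ_i − Λ_i S^{-1/2}‖_F² ≤ n(1 − √(1−ε))². -/

import Mathlib

open scoped InnerProductSpace
set_option maxHeartbeats 1000000


/-- The Hilbert–Schmidt norm squared `‖T‖_F²` of an operator on a finite-dimensional
Hilbert space. -/
noncomputable def hsNormSq {H K : Type*} [NormedAddCommGroup H] [InnerProductSpace ℂ H]
    [FiniteDimensional ℂ H] [NormedAddCommGroup K] [InnerProductSpace ℂ K]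
    (T : H →L[ℂ] K) : ℝ :=
  ∑ k, ‖T (stdOrthonormalBasis ℂ H k)‖ ^ 2

/-- An ε-nearly Parseval g-frame `{Λ i}` on an `n`-dimensional Hilbert space with
frame operator `S` satisfies `∑ i ‖Λ i − Λ i S^{-1/2}‖_F² ≤ n (1 − √(1−ε))²`. -/
theorem nearly_parseval_gframe_dist_le
    {H K : Type*} [NormedAddCommGroup H] [InnerProductSpace ℂ H] [FiniteDimensional ℂ H]
    [NormedAddCommGroup K] [InnerProductSpace ℂ K] [CompleteSpace K]
    {I : Type*} (Λ : I → (H →L[ℂ] K)) (S : H →L[ℂ] H)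
    (ε : ℝ) (hε0 : 0 ≤ ε) (hε1 : ε < 1)
    (hsum : ∀ x : H, Summable fun i => ‖Λ i x‖ ^ 2)
    (hlow : ∀ x : H, (1 - ε) * ‖x‖ ^ 2 ≤ ∑' i, ‖Λ i x‖ ^ 2)
    (hup : ∀ x : H, ∑' i, ‖Λ i x‖ ^ 2 ≤ (1 + ε) * ‖x‖ ^ 2)
    (hS : ∀ x : H, HasSum (fun i => (Λ i).adjoint (Λ i x)) (S x)) :
    ∑' i, hsNormSq (Λ i - (Λ i) ∘L cfc (fun t : ℝ => t ^ (-(1/2 : ℝ))) S)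
      ≤ (Module.finrank ℂ H : ℝ) * (1 - Real.sqrt (1 - ε)) ^ 2 := by
  haveI : CompleteSpace H := FiniteDimensional.complete ℂ H
  have hinner : ∀ x y : H, ⟪x, S y⟫_ℂ = ∑' i, ⟪Λ i x, Λ i y⟫_ℂ := by
    intro x y
    have h1 := (hS y).mapL (innerSL ℂ x)
    simp only [innerSL_apply_apply, ContinuousLinearMap.adjoint_inner_right] at h1
    exact h1.tsum_eq.symm
  have hre : ∀ x : H, ⟪x, S x⟫_ℂ = ((∑' i, ‖Λ i x‖ ^ 2 : ℝ) : ℂ) := by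
    intro x
    rw [hinner x x, tsum_congr (fun i => (inner_self_eq_norm_sq_to_K (𝕜 := ℂ) (Λ i x)))]
    simpa using ((hsum x).hasSum.mapL Complex.ofRealCLM).tsum_eq
  have hSA : IsSelfAdjoint S := by
    rw [ContinuousLinearMap.isSelfAdjoint_iff_isSymmetric]
    intro x y
    change ⟪S x, y⟫_ℂ = ⟪x, S y⟫_ℂ
    rw [← inner_conj_symm (S x) y, hinner y x, hinner x y]
    calc (starRingEnd ℂ) (∑' i, ⟪Λ i y, Λ i x⟫_ℂ) = ∑' i, (starRingEnd ℂ) ⟪Λ i y, Λ i x⟫_ℂ :=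
          tsum_star
      _ = ∑' i, ⟪Λ i x, Λ i y⟫_ℂ := tsum_congr fun i => inner_conj_symm _ _
  -- re of inner
  have hre' : ∀ x : H, RCLike.re ⟪S x, x⟫_ℂ = ∑' i, ‖Λ i x‖ ^ 2 := by
    intro x
    rw [← inner_conj_symm (S x) x, hre x]
    simp
  have hlo : algebraMap ℝ (H →L[ℂ] H) (1 - ε) ≤ S := by
    rw [ContinuousLinearMap.le_def]
    constructor
    · exact ContinuousLinearMap.isSelfAdjoint_iff_isSymmetric.mp (hSA.sub ((IsSelfAdjoint.all (1 - ε)).algebraMap _))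
    · intro x
      rw [ContinuousLinearMap.reApplyInnerSelf_apply]
      rw [ContinuousLinearMap.sub_apply, inner_sub_left, map_sub, hre' x]
      have : RCLike.re ⟪algebraMap ℝ (H →L[ℂ] H) (1 - ε) x, x⟫_ℂ = (1 - ε) * ‖x‖ ^ 2 := by
        simp only [Algebra.algebraMap_eq_smul_one, ContinuousLinearMap.smul_apply,
          ContinuousLinearMap.one_apply]
        rw [RCLike.real_smul_eq_coe_smul (K := ℂ), inner_smul_left]
        simp [inner_self_eq_norm_sq_to_K, pow_two]
      rw [this]
      have := hlow x
      linarith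
  have hhi : S ≤ algebraMap ℝ (H →L[ℂ] H) (1 + ε) := by
    rw [ContinuousLinearMap.le_def]
    constructor
    · exact ContinuousLinearMap.isSelfAdjoint_iff_isSymmetric.mp (((IsSelfAdjoint.all (1 + ε)).algebraMap _).sub hSA)
    · intro x
      rw [ContinuousLinearMap.reApplyInnerSelf_apply]
      rw [ContinuousLinearMap.sub_apply, inner_sub_left, map_sub, hre' x]
      have : RCLike.re ⟪algebraMap ℝ (H →L[ℂ] H) (1 + ε) x, x⟫_ℂ = (1 + ε) * ‖x‖ ^ 2 := by
        simp only [Algebra.algebraMap_eq_smul_one, ContinuousLinearMap.smul_apply,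
          ContinuousLinearMap.one_apply]
        rw [RCLike.real_smul_eq_coe_smul (K := ℂ), inner_smul_left]
        simp [inner_self_eq_norm_sq_to_K, pow_two]
      rw [this]
      have := hup x
      linarith
  have hspec : ∀ t ∈ spectrum ℝ S, (1 - ε) ≤ t ∧ t ≤ 1 + ε := by
    intro t ht
    exact ⟨(algebraMap_le_iff_le_spectrum (a := S) hSA).mp hlo t ht,
      (le_algebraMap_iff_spectrum_le (a := S) hSA).mp hhi t ht⟩
  have hc0 : 0 ≤ 1 - Real.sqrt (1 - ε) := by
    nlinarith [Real.sqrt_nonneg (1 - ε), Real.sq_sqrt (show (0:ℝ) ≤ 1 - ε by linarith)]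
  set g : ℝ → ℝ := fun t => t ^ (-(1/2 : ℝ)) with hgdef
  set d : ℝ → ℝ := fun t => Real.sqrt t - 1 with hddef
  set e : ℝ → ℝ := fun t => 1 - g t with hedef
  have hpos : ∀ t ∈ spectrum ℝ S, (0:ℝ) < t := fun t ht =>
    lt_of_lt_of_le (by linarith) (hspec t ht).1
  have hgc : ContinuousOn g (spectrum ℝ S) := fun t ht =>
    (Real.continuousAt_rpow_const t _ (Or.inl (hpos t ht).ne')).continuousWithinAt
  have hec : ContinuousOn e (spectrum ℝ S) := continuousOn_const.sub hgc
  have hdc : ContinuousOn d (spectrum ℝ S) :=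
    (Real.continuous_sqrt.sub continuous_const).continuousOn
  set E : H →L[ℂ] H := (1 : H →L[ℂ] H) - cfc g S with hEdef
  set D : H →L[ℂ] H := cfc d S with hDdef
  have hE : E = cfc e S := by
    rw [hEdef, hedef, cfc_sub (fun _ => (1:ℝ)) g S continuousOn_const hgc]
    rw [cfc_const 1 S hSA, map_one]
  have hEsa : IsSelfAdjoint E := hE ▸ cfc_predicate e S
  have hDsa : IsSelfAdjoint D := cfc_predicate d S
  have hESE : E * S * E = D * D := by
    rw [hE]
    calc cfc e S * S * cfc e S = cfc e S * cfc (fun t : ℝ => t) S * cfc e S := by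
          rw [cfc_id' ℝ S hSA]
      _ = cfc (fun t => e t * t * e t) S := by
          rw [cfc_mul (fun t => e t * t) e S (hec.mul (continuousOn_id' _)) hec,
            cfc_mul e (fun t => t) S hec (continuousOn_id' _)]
      _ = cfc (fun t => d t * d t) S := by
          apply cfc_congr
          intro t ht
          have h0 : (0:ℝ) < t := hpos t ht
          have hs : Real.sqrt t ^ 2 = t := Real.sq_sqrt h0.le
          have hs0 : 0 < Real.sqrt t := Real.sqrt_pos.mpr h0
          have hrp : g t = (Real.sqrt t)⁻¹ := by
            rw [hgdef]
            simp only []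
            rw [Real.rpow_neg h0.le, ← Real.sqrt_eq_rpow]
          rw [hedef, hddef]
          simp only []
          rw [hrp]
          field_simp
          nlinarith [hs]
      _ = D * D := by rw [hDdef, cfc_mul _ _ S hdc hdc]
  have key : ∀ x : H, ∑' i, ‖Λ i (E x)‖ ^ 2 = ‖D x‖ ^ 2 := by
    intro x
    have hsymE := ContinuousLinearMap.isSelfAdjoint_iff_isSymmetric.mp hEsa
    have hsymD := ContinuousLinearMap.isSelfAdjoint_iff_isSymmetric.mp hDsa
    have h3 : ⟪E x, S (E x)⟫_ℂ = ((‖D x‖ ^ 2 : ℝ) : ℂ) := by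
      calc ⟪E x, S (E x)⟫_ℂ = ⟪x, E (S (E x))⟫_ℂ := hsymE x (S (E x))
        _ = ⟪x, (E * S * E) x⟫_ℂ := rfl
        _ = ⟪x, (D * D) x⟫_ℂ := by rw [hESE]
        _ = ⟪x, D (D x)⟫_ℂ := rfl
        _ = ⟪D x, D x⟫_ℂ := (hsymD x (D x)).symm
        _ = _ := by rw [inner_self_eq_norm_sq_to_K]; norm_cast
    have h4 := hre (E x)
    rw [h4] at h3
    exact_mod_cast h3
  have hDnorm : ‖D‖ ≤ 1 - Real.sqrt (1 - ε) := by
    apply norm_cfc_le hc0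
    intro t ht
    obtain ⟨h1, h2⟩ := hspec t ht
    simp only [hddef, Real.norm_eq_abs, abs_le]
    constructor
    · have : Real.sqrt (1 - ε) ≤ Real.sqrt t := Real.sqrt_le_sqrt h1
      linarith
    · have ht2 : Real.sqrt t ≤ Real.sqrt (1 + ε) := Real.sqrt_le_sqrt h2
      have h4 : Real.sqrt (1 + ε) + Real.sqrt (1 - ε) ≤ 2 := by
        nlinarith [Real.sq_sqrt (show (0:ℝ) ≤ 1 + ε by linarith),
          Real.sq_sqrt (show (0:ℝ) ≤ 1 - ε by linarith),
          Real.sqrt_nonneg (1 + ε), Real.sqrt_nonneg (1 - ε),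
          sq_nonneg (Real.sqrt (1 + ε) - Real.sqrt (1 - ε)),
          sq_nonneg (Real.sqrt (1 + ε) + Real.sqrt (1 - ε) - 2)]
      linarith
  have hrw : ∀ i, Λ i - (Λ i) ∘L cfc g S = (Λ i) ∘L E := by
    intro i; ext x
    simp [hEdef, ContinuousLinearMap.sub_apply, map_sub]
  calc ∑' i, hsNormSq (Λ i - (Λ i) ∘L cfc g S)
      = ∑' i, ∑ k, ‖Λ i (E (stdOrthonormalBasis ℂ H k))‖ ^ 2 := by
        refine tsum_congr fun i => ?_
        rw [hrw i]
        simp [hsNormSq, ContinuousLinearMap.comp_apply]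
    _ = ∑ k, ∑' i, ‖Λ i (E (stdOrthonormalBasis ℂ H k))‖ ^ 2 :=
        Summable.tsum_finsetSum fun k _ => hsum _
    _ = ∑ k, ‖D (stdOrthonormalBasis ℂ H k)‖ ^ 2 :=
        Finset.sum_congr rfl fun k _ => key _
    _ ≤ ∑ _k : Fin (Module.finrank ℂ H), (1 - Real.sqrt (1 - ε)) ^ 2 := by
        refine Finset.sum_le_sum fun k _ => ?_
        have h1 : ‖D (stdOrthonormalBasis ℂ H k)‖ ≤ 1 - Real.sqrt (1 - ε) := by
          refine le_trans (D.le_opNorm _) ?_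
          rw [(stdOrthonormalBasis ℂ H).orthonormal.1 k, mul_one]
          exact hDnorm
        exact pow_le_pow_left₀ (norm_nonneg _) h1 2
    _ = (Module.finrank ℂ H : ℝ) * (1 - Real.sqrt (1 - ε)) ^ 2 := by
        simp [Finset.sum_const, Finset.card_univ, nsmul_eq_mul]
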